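/- Let 0 < δ < 1 and let Z be the closed unit disk centered at the origin in the Euclidean plane ℝ². Define f₀ : ℝ² → ℝ on Z by f₀(z) = √(1 − ‖z‖) if 1 − ‖z‖ ≤ 1/4, and f₀(z) = δ·√(1 − ‖z‖) + (1 − δ)/2 if 1 − ‖z‖ > 1/4. Then f₀ is strictly concave on Z. -/

import Mathlib

open Set Metric

/-- If `φ` is strictly concave and strictly monotone on `[0,1]`, then
`z ↦ φ (1 - ‖z‖)` is strictly concave on the closed unit ball of a strictly convex space. -/
lemma aux_strictConcaveOn_comp {E : Type*} [NormedAddCommGroup E] [NormedSpace ℝ E]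
    [StrictConvexSpace ℝ E] {φ : ℝ → ℝ}
    (hφ : StrictConcaveOn ℝ (Icc (0:ℝ) 1) φ) (hmono : StrictMonoOn φ (Icc (0:ℝ) 1)) :
    StrictConcaveOn ℝ (closedBall (0 : E) 1) (fun z => φ (1 - ‖z‖)) := by
  refine ⟨convex_closedBall _ _, ?_⟩
  intro x hx y hy hxy a b ha hb hab
  rw [mem_closedBall_zero_iff] at hx hy
  have hx0 : (0:ℝ) ≤ ‖x‖ := norm_nonneg x
  have hy0 : (0:ℝ) ≤ ‖y‖ := norm_nonneg y
  have hxm : 1 - ‖x‖ ∈ Icc (0:ℝ) 1 := ⟨by linarith, by linarith⟩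
  have hym : 1 - ‖y‖ ∈ Icc (0:ℝ) 1 := ⟨by linarith, by linarith⟩
  have hn : ‖a • x + b • y‖ ≤ a * ‖x‖ + b * ‖y‖ := by
    calc ‖a • x + b • y‖ ≤ ‖a • x‖ + ‖b • y‖ := norm_add_le _ _
      _ = a * ‖x‖ + b * ‖y‖ := by
          rw [norm_smul, norm_smul, Real.norm_of_nonneg ha.le, Real.norm_of_nonneg hb.le]
  have hcombo : a * ‖x‖ + b * ‖y‖ ≤ 1 := by nlinarith
  have hnm : 1 - ‖a • x + b • y‖ ∈ Icc (0:ℝ) 1 := ⟨by linarith, by linarith [norm_nonneg (a • x + b • y)]⟩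
  by_cases hne : ‖x‖ = ‖y‖
  · -- equal norms: strict triangle inequality via strict convexity
    have hr : (0:ℝ) < ‖x‖ := by
      rcases hx0.lt_or_eq with h | h
      · exact h
      · exfalso; apply hxy
        have hx' : x = 0 := norm_eq_zero.1 h.symm
        have hy' : y = 0 := norm_eq_zero.1 (hne ▸ h).symm
        rw [hx', hy']
    have hlt : ‖a • x + b • y‖ < ‖x‖ :=
      norm_combo_lt_of_ne le_rfl (le_of_eq hne.symm) hxy ha hb hab
    have h1 : φ (1 - ‖x‖) < φ (1 - ‖a • x + b • y‖) :=
      hmono hxm hnm (by linarith)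
    have : a • φ (1 - ‖x‖) + b • φ (1 - ‖y‖) = φ (1 - ‖x‖) := by
      rw [← hne]; simp only [smul_eq_mul]; linear_combination φ (1 - ‖x‖) * hab
    rw [this]; exact h1
  · -- different norms: strict concavity kicks in
    have h1 : φ (1 - (a * ‖x‖ + b * ‖y‖)) ≤ φ (1 - ‖a • x + b • y‖) :=
      hmono.monotoneOn ⟨by linarith, by nlinarith⟩ hnm (by linarith)
    have h2 : a • φ (1 - ‖x‖) + b • φ (1 - ‖y‖) < φ (a • (1 - ‖x‖) + b • (1 - ‖y‖)) :=
      hφ.2 hxm hym (by intro h; apply hne; simpa using h) ha hb hab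
    have h3 : a • (1 - ‖x‖) + b • (1 - ‖y‖) = 1 - (a * ‖x‖ + b * ‖y‖) := by
      simp [smul_eq_mul]; ring_nf; linarith
    rw [h3] at h2
    exact lt_of_lt_of_le h2 h1

theorem strictConcaveOn_profile_fn
    {δ : ℝ} (hδ0 : 0 < δ) (hδ1 : δ < 1) :
    StrictConcaveOn ℝ (Metric.closedBall (0 : EuclideanSpace ℝ (Fin 2)) 1)
      (fun z : EuclideanSpace ℝ (Fin 2) =>
        if 1 - ‖z‖ ≤ 1 / 4 then Real.sqrt (1 - ‖z‖)
        else δ * Real.sqrt (1 - ‖z‖) + (1 - δ) / 2) := by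
  have hsqrt : StrictConcaveOn ℝ (Icc (0:ℝ) 1) Real.sqrt :=
    Real.strictConcaveOn_sqrt.subset (Icc_subset_Ici_self) (convex_Icc 0 1)
  have hsm : StrictMonoOn Real.sqrt (Icc (0:ℝ) 1) := fun s hs t ht hst =>
    Real.sqrt_lt_sqrt hs.1 hst
  have hu : StrictConcaveOn ℝ (closedBall (0 : EuclideanSpace ℝ (Fin 2)) 1)
      (fun z => Real.sqrt (1 - ‖z‖)) := aux_strictConcaveOn_comp hsqrt hsm
  have hφ2 : StrictConcaveOn ℝ (Icc (0:ℝ) 1) (fun d => δ * Real.sqrt d + (1 - δ) / 2) := by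
    refine ⟨convex_Icc 0 1, fun s hs t ht hst a b ha hb hab => ?_⟩
    have := hsqrt.2 hs ht hst ha hb hab
    simp only [smul_eq_mul] at this ⊢
    nlinarith
  have hm2 : StrictMonoOn (fun d => δ * Real.sqrt d + (1 - δ) / 2) (Icc (0:ℝ) 1) := by
    intro s hs t ht hst
    have := Real.sqrt_lt_sqrt hs.1 hst
    simp only
    nlinarith
  have hv : StrictConcaveOn ℝ (closedBall (0 : EuclideanSpace ℝ (Fin 2)) 1)
      (fun z => δ * Real.sqrt (1 - ‖z‖) + (1 - δ) / 2) := aux_strictConcaveOn_comp hφ2 hm2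
  have key := hu.inf hv
  refine Eq.mpr (congrArg (StrictConcaveOn ℝ (closedBall (0 : EuclideanSpace ℝ (Fin 2)) 1)) ?_) key
  funext z
  set d := 1 - ‖z‖ with hd
  simp only [Pi.inf_apply]
  by_cases h : d ≤ 1/4
  · rw [if_pos h]
    have hs : Real.sqrt d ≤ 1/2 := by
      calc Real.sqrt d ≤ Real.sqrt (1/4) := Real.sqrt_le_sqrt h
        _ = 1/2 := by rw [show (1:ℝ)/4 = (1/2)^2 by norm_num, Real.sqrt_sq (by norm_num)]
    have : Real.sqrt d ≤ δ * Real.sqrt d + (1 - δ) / 2 := by nlinarith [Real.sqrt_nonneg d]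
    exact (min_eq_left this).symm
  · rw [if_neg h]
    push_neg at h
    have hs : 1/2 < Real.sqrt d := by
      have : Real.sqrt (1/4) < Real.sqrt d := Real.sqrt_lt_sqrt (by norm_num) h
      rwa [show (1:ℝ)/4 = (1/2)^2 by norm_num, Real.sqrt_sq (by norm_num)] at this
    have : δ * Real.sqrt d + (1 - δ) / 2 ≤ Real.sqrt d := by nlinarith
    exact (min_eq_right this).symm
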